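/- Let |φ⟩ = Σ a_{ijk}|ijk⟩ be a unit vector in ℂ^{d1}⊗ℂ^{d2}⊗ℂ^{d3} with d1, d2, d3 ≥ 2. Then C_3²(|φ⟩) ≥ (1/((d1−1)(d2−1)(d3−1))) · Σ C_3²(|φ⟩_{2⊗2⊗2}), where the sum runs over all (d1 choose 2)(d2 choose 2)(d3 choose 2) choices of index pairs i_1<i_2, j_1<j_2, k_1<k_2, |φ⟩_{2⊗2⊗2} = Σ_{i∈{i_1,i_2}, j∈{j_1,j_2}, k∈{k_1,k_2}} a_{ijk}|ijk⟩ is the corresponding unnormalized three-qubit substate, and C_3² of an unnormalized three-qubit vector is given by the homogeneous coefficient formula C_3²(ψ) = (1/2) Σ ( |b_{ijk}b_{pqt} − b_{ijt}b_{pqk}|² + |b_{ijk}b_{pqt} − b_{iqk}b_{pjt}|² + |b_{ijk}b_{pqt} − b_{pjk}b_{iqt}|² ) over its coefficients b. -/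

import Mathlib

open scoped BigOperators

namespace Stmt6

/-- The (unnormalized) projector `|v⟩⟨v|` associated to a vector `v`. -/
noncomputable def outer {I : Type*} (v : I → ℂ) : Matrix I I ℂ :=
  Matrix.of fun x y => v x * (starRingEnd ℂ) (v y)

variable {d1 d2 d3 : ℕ}

/-- `tr(ρ_α²)` for `α = {1}`. -/
noncomputable def tr1sq (ρ : Matrix (Fin d1 × Fin d2 × Fin d3) (Fin d1 × Fin d2 × Fin d3) ℂ) : ℂ :=
  ∑ i, ∑ p, (∑ j, ∑ k, ρ (i, j, k) (p, j, k)) * (∑ j, ∑ k, ρ (p, j, k) (i, j, k))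

/-- `tr(ρ_α²)` for `α = {2}`. -/
noncomputable def tr2sq (ρ : Matrix (Fin d1 × Fin d2 × Fin d3) (Fin d1 × Fin d2 × Fin d3) ℂ) : ℂ :=
  ∑ j, ∑ q, (∑ i, ∑ k, ρ (i, j, k) (i, q, k)) * (∑ i, ∑ k, ρ (i, q, k) (i, j, k))

/-- `tr(ρ_α²)` for `α = {3}`. -/
noncomputable def tr3sq (ρ : Matrix (Fin d1 × Fin d2 × Fin d3) (Fin d1 × Fin d2 × Fin d3) ℂ) : ℂ :=
  ∑ k, ∑ t, (∑ i, ∑ j, ρ (i, j, k) (i, j, t)) * (∑ i, ∑ j, ρ (i, j, t) (i, j, k))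

/-- `tr(ρ_α²)` for `α = {1,2}`. -/
noncomputable def tr12sq (ρ : Matrix (Fin d1 × Fin d2 × Fin d3) (Fin d1 × Fin d2 × Fin d3) ℂ) : ℂ :=
  ∑ i, ∑ p, ∑ j, ∑ q, (∑ k, ρ (i, j, k) (p, q, k)) * (∑ k, ρ (p, q, k) (i, j, k))

/-- `tr(ρ_α²)` for `α = {1,3}`. -/
noncomputable def tr13sq (ρ : Matrix (Fin d1 × Fin d2 × Fin d3) (Fin d1 × Fin d2 × Fin d3) ℂ) : ℂ :=
  ∑ i, ∑ p, ∑ k, ∑ t, (∑ j, ρ (i, j, k) (p, j, t)) * (∑ j, ρ (p, j, t) (i, j, k))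

/-- `tr(ρ_α²)` for `α = {2,3}`. -/
noncomputable def tr23sq (ρ : Matrix (Fin d1 × Fin d2 × Fin d3) (Fin d1 × Fin d2 × Fin d3) ℂ) : ℂ :=
  ∑ j, ∑ q, ∑ k, ∑ t, (∑ i, ρ (i, j, k) (i, q, t)) * (∑ i, ρ (i, q, t) (i, j, k))

/-- Tripartite pure-state concurrence
`C₃(|φ⟩) = 2^{1−3/2} √((2³−2) − Σ_α tr(ρ_α²))`, where `α` runs over the six
nonempty proper subsets of `{1,2,3}`. -/
noncomputable def pureC3 (φ : Fin d1 × Fin d2 × Fin d3 → ℂ) : ℝ :=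
  (2 : ℝ) ^ ((1 : ℝ) - (3 : ℝ) / 2) *
    Real.sqrt (((2 : ℝ) ^ (3 : ℕ) - 2) -
      (tr1sq (outer φ) + tr2sq (outer φ) + tr3sq (outer φ) +
        tr12sq (outer φ) + tr13sq (outer φ) + tr23sq (outer φ)).re)


/-- Squared concurrence of a (possibly unnormalized) three-qubit vector,
given by the homogeneous coefficient formula. -/
noncomputable def C3sqCoeff (b : Fin 2 × Fin 2 × Fin 2 → ℂ) : ℝ :=
  (1 / 2) * ∑ i, ∑ p, ∑ j, ∑ q, ∑ k, ∑ t,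
    (‖b (i, j, k) * b (p, q, t) - b (i, j, t) * b (p, q, k)‖ ^ 2 +
     ‖b (i, j, k) * b (p, q, t) - b (i, q, k) * b (p, j, t)‖ ^ 2 +
     ‖b (i, j, k) * b (p, q, t) - b (p, j, k) * b (i, q, t)‖ ^ 2)

/-- The (unnormalized) three-qubit substate of `a` determined by the index
pairs `i₁,i₂`, `j₁,j₂`, `k₁,k₂`. -/
noncomputable def subvec (a : Fin d1 × Fin d2 × Fin d3 → ℂ)
    (i₁ i₂ : Fin d1) (j₁ j₂ : Fin d2) (k₁ k₂ : Fin d3) : Fin 2 × Fin 2 × Fin 2 → ℂ :=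
  fun x => a (if x.1 = 0 then i₁ else i₂,
              if x.2.1 = 0 then j₁ else j₂,
              if x.2.2 = 0 then k₁ else k₂)

lemma reorder_EFABCD {A B C D E F : Type*} [Fintype A] [Fintype B] [Fintype C] [Fintype D] [Fintype E] [Fintype F] {M : Type*} [AddCommMonoid M] (f : A → B → C → D → E → F → M) :
    (∑ a5 : E, ∑ a6 : F, ∑ a1 : A, ∑ a2 : B, ∑ a3 : C, ∑ a4 : D, f a1 a2 a3 a4 a5 a6)
      = ∑ a1 : A, ∑ a2 : B, ∑ a3 : C, ∑ a4 : D, ∑ a5 : E, ∑ a6 : F, f a1 a2 a3 a4 a5 a6 := by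
  have h1 : (∑ a5 : E, ∑ a6 : F, ∑ a1 : A, ∑ a2 : B, ∑ a3 : C, ∑ a4 : D, f a1 a2 a3 a4 a5 a6)
      = ∑ x : E × F × A × B × C × D, f x.2.2.1 x.2.2.2.1 x.2.2.2.2.1 x.2.2.2.2.2 x.1 x.2.1 := by
    simp [Fintype.sum_prod_type]
  have h2 : (∑ a1 : A, ∑ a2 : B, ∑ a3 : C, ∑ a4 : D, ∑ a5 : E, ∑ a6 : F, f a1 a2 a3 a4 a5 a6)
      = ∑ x : A × B × C × D × E × F, f x.1 x.2.1 x.2.2.1 x.2.2.2.1 x.2.2.2.2.1 x.2.2.2.2.2 := by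
    simp [Fintype.sum_prod_type]
  rw [h1, h2]
  exact (Equiv.sum_comp (⟨fun y => (y.2.2.2.2.1, y.2.2.2.2.2, y.1, y.2.1, y.2.2.1, y.2.2.2.1), fun x => (x.2.2.1, x.2.2.2.1, x.2.2.2.2.1, x.2.2.2.2.2, x.1, x.2.1),
    fun _ => rfl, fun _ => rfl⟩ : (A × B × C × D × E × F) ≃ (E × F × A × B × C × D))
    (fun x : E × F × A × B × C × D => f x.2.2.1 x.2.2.2.1 x.2.2.2.2.1 x.2.2.2.2.2 x.1 x.2.1)).symm

lemma reorder_CDABEF {A B C D E F : Type*} [Fintype A] [Fintype B] [Fintype C] [Fintype D] [Fintype E] [Fintype F] {M : Type*} [AddCommMonoid M] (f : A → B → C → D → E → F → M) :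
    (∑ a3 : C, ∑ a4 : D, ∑ a1 : A, ∑ a2 : B, ∑ a5 : E, ∑ a6 : F, f a1 a2 a3 a4 a5 a6)
      = ∑ a1 : A, ∑ a2 : B, ∑ a3 : C, ∑ a4 : D, ∑ a5 : E, ∑ a6 : F, f a1 a2 a3 a4 a5 a6 := by
  have h1 : (∑ a3 : C, ∑ a4 : D, ∑ a1 : A, ∑ a2 : B, ∑ a5 : E, ∑ a6 : F, f a1 a2 a3 a4 a5 a6)
      = ∑ x : C × D × A × B × E × F, f x.2.2.1 x.2.2.2.1 x.1 x.2.1 x.2.2.2.2.1 x.2.2.2.2.2 := by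
    simp [Fintype.sum_prod_type]
  have h2 : (∑ a1 : A, ∑ a2 : B, ∑ a3 : C, ∑ a4 : D, ∑ a5 : E, ∑ a6 : F, f a1 a2 a3 a4 a5 a6)
      = ∑ x : A × B × C × D × E × F, f x.1 x.2.1 x.2.2.1 x.2.2.2.1 x.2.2.2.2.1 x.2.2.2.2.2 := by
    simp [Fintype.sum_prod_type]
  rw [h1, h2]
  exact (Equiv.sum_comp (⟨fun y => (y.2.2.1, y.2.2.2.1, y.1, y.2.1, y.2.2.2.2.1, y.2.2.2.2.2), fun x => (x.2.2.1, x.2.2.2.1, x.1, x.2.1, x.2.2.2.2.1, x.2.2.2.2.2),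
    fun _ => rfl, fun _ => rfl⟩ : (A × B × C × D × E × F) ≃ (C × D × A × B × E × F))
    (fun x : C × D × A × B × E × F => f x.2.2.1 x.2.2.2.1 x.1 x.2.1 x.2.2.2.2.1 x.2.2.2.2.2)).symm

lemma reorder_ABEFCD {A B C D E F : Type*} [Fintype A] [Fintype B] [Fintype C] [Fintype D] [Fintype E] [Fintype F] {M : Type*} [AddCommMonoid M] (f : A → B → C → D → E → F → M) :
    (∑ a1 : A, ∑ a2 : B, ∑ a5 : E, ∑ a6 : F, ∑ a3 : C, ∑ a4 : D, f a1 a2 a3 a4 a5 a6)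
      = ∑ a1 : A, ∑ a2 : B, ∑ a3 : C, ∑ a4 : D, ∑ a5 : E, ∑ a6 : F, f a1 a2 a3 a4 a5 a6 := by
  have h1 : (∑ a1 : A, ∑ a2 : B, ∑ a5 : E, ∑ a6 : F, ∑ a3 : C, ∑ a4 : D, f a1 a2 a3 a4 a5 a6)
      = ∑ x : A × B × E × F × C × D, f x.1 x.2.1 x.2.2.2.2.1 x.2.2.2.2.2 x.2.2.1 x.2.2.2.1 := by
    simp [Fintype.sum_prod_type]
  have h2 : (∑ a1 : A, ∑ a2 : B, ∑ a3 : C, ∑ a4 : D, ∑ a5 : E, ∑ a6 : F, f a1 a2 a3 a4 a5 a6)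
      = ∑ x : A × B × C × D × E × F, f x.1 x.2.1 x.2.2.1 x.2.2.2.1 x.2.2.2.2.1 x.2.2.2.2.2 := by
    simp [Fintype.sum_prod_type]
  rw [h1, h2]
  exact (Equiv.sum_comp (⟨fun y => (y.1, y.2.1, y.2.2.2.2.1, y.2.2.2.2.2, y.2.2.1, y.2.2.2.1), fun x => (x.1, x.2.1, x.2.2.2.2.1, x.2.2.2.2.2, x.2.2.1, x.2.2.2.1),
    fun _ => rfl, fun _ => rfl⟩ : (A × B × C × D × E × F) ≃ (A × B × E × F × C × D))
    (fun x : A × B × E × F × C × D => f x.1 x.2.1 x.2.2.2.2.1 x.2.2.2.2.2 x.2.2.1 x.2.2.2.1)).symm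

lemma reorder_CDEFAB {A B C D E F : Type*} [Fintype A] [Fintype B] [Fintype C] [Fintype D] [Fintype E] [Fintype F] {M : Type*} [AddCommMonoid M] (f : A → B → C → D → E → F → M) :
    (∑ a3 : C, ∑ a4 : D, ∑ a5 : E, ∑ a6 : F, ∑ a1 : A, ∑ a2 : B, f a1 a2 a3 a4 a5 a6)
      = ∑ a1 : A, ∑ a2 : B, ∑ a3 : C, ∑ a4 : D, ∑ a5 : E, ∑ a6 : F, f a1 a2 a3 a4 a5 a6 := by
  have h1 : (∑ a3 : C, ∑ a4 : D, ∑ a5 : E, ∑ a6 : F, ∑ a1 : A, ∑ a2 : B, f a1 a2 a3 a4 a5 a6)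
      = ∑ x : C × D × E × F × A × B, f x.2.2.2.2.1 x.2.2.2.2.2 x.1 x.2.1 x.2.2.1 x.2.2.2.1 := by
    simp [Fintype.sum_prod_type]
  have h2 : (∑ a1 : A, ∑ a2 : B, ∑ a3 : C, ∑ a4 : D, ∑ a5 : E, ∑ a6 : F, f a1 a2 a3 a4 a5 a6)
      = ∑ x : A × B × C × D × E × F, f x.1 x.2.1 x.2.2.1 x.2.2.2.1 x.2.2.2.2.1 x.2.2.2.2.2 := by
    simp [Fintype.sum_prod_type]
  rw [h1, h2]
  exact (Equiv.sum_comp (⟨fun y => (y.2.2.1, y.2.2.2.1, y.2.2.2.2.1, y.2.2.2.2.2, y.1, y.2.1), fun x => (x.2.2.2.2.1, x.2.2.2.2.2, x.1, x.2.1, x.2.2.1, x.2.2.2.1),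
    fun _ => rfl, fun _ => rfl⟩ : (A × B × C × D × E × F) ≃ (C × D × E × F × A × B))
    (fun x : C × D × E × F × A × B => f x.2.2.2.2.1 x.2.2.2.2.2 x.1 x.2.1 x.2.2.1 x.2.2.2.1)).symm

lemma reorder_ACEBDF {A B C D E F : Type*} [Fintype A] [Fintype B] [Fintype C] [Fintype D] [Fintype E] [Fintype F] {M : Type*} [AddCommMonoid M] (f : A → B → C → D → E → F → M) :
    (∑ a1 : A, ∑ a3 : C, ∑ a5 : E, ∑ a2 : B, ∑ a4 : D, ∑ a6 : F, f a1 a2 a3 a4 a5 a6)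
      = ∑ a1 : A, ∑ a2 : B, ∑ a3 : C, ∑ a4 : D, ∑ a5 : E, ∑ a6 : F, f a1 a2 a3 a4 a5 a6 := by
  have h1 : (∑ a1 : A, ∑ a3 : C, ∑ a5 : E, ∑ a2 : B, ∑ a4 : D, ∑ a6 : F, f a1 a2 a3 a4 a5 a6)
      = ∑ x : A × C × E × B × D × F, f x.1 x.2.2.2.1 x.2.1 x.2.2.2.2.1 x.2.2.1 x.2.2.2.2.2 := by
    simp [Fintype.sum_prod_type]
  have h2 : (∑ a1 : A, ∑ a2 : B, ∑ a3 : C, ∑ a4 : D, ∑ a5 : E, ∑ a6 : F, f a1 a2 a3 a4 a5 a6)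
      = ∑ x : A × B × C × D × E × F, f x.1 x.2.1 x.2.2.1 x.2.2.2.1 x.2.2.2.2.1 x.2.2.2.2.2 := by
    simp [Fintype.sum_prod_type]
  rw [h1, h2]
  exact (Equiv.sum_comp (⟨fun y => (y.1, y.2.2.1, y.2.2.2.2.1, y.2.1, y.2.2.2.1, y.2.2.2.2.2), fun x => (x.1, x.2.2.2.1, x.2.1, x.2.2.2.2.1, x.2.2.1, x.2.2.2.2.2),
    fun _ => rfl, fun _ => rfl⟩ : (A × B × C × D × E × F) ≃ (A × C × E × B × D × F))
    (fun x : A × C × E × B × D × F => f x.1 x.2.2.2.1 x.2.1 x.2.2.2.2.1 x.2.2.1 x.2.2.2.2.2)).symm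

lemma reorder_ACFBDE {A B C D E F : Type*} [Fintype A] [Fintype B] [Fintype C] [Fintype D] [Fintype E] [Fintype F] {M : Type*} [AddCommMonoid M] (f : A → B → C → D → E → F → M) :
    (∑ a1 : A, ∑ a3 : C, ∑ a6 : F, ∑ a2 : B, ∑ a4 : D, ∑ a5 : E, f a1 a2 a3 a4 a5 a6)
      = ∑ a1 : A, ∑ a2 : B, ∑ a3 : C, ∑ a4 : D, ∑ a5 : E, ∑ a6 : F, f a1 a2 a3 a4 a5 a6 := by
  have h1 : (∑ a1 : A, ∑ a3 : C, ∑ a6 : F, ∑ a2 : B, ∑ a4 : D, ∑ a5 : E, f a1 a2 a3 a4 a5 a6)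
      = ∑ x : A × C × F × B × D × E, f x.1 x.2.2.2.1 x.2.1 x.2.2.2.2.1 x.2.2.2.2.2 x.2.2.1 := by
    simp [Fintype.sum_prod_type]
  have h2 : (∑ a1 : A, ∑ a2 : B, ∑ a3 : C, ∑ a4 : D, ∑ a5 : E, ∑ a6 : F, f a1 a2 a3 a4 a5 a6)
      = ∑ x : A × B × C × D × E × F, f x.1 x.2.1 x.2.2.1 x.2.2.2.1 x.2.2.2.2.1 x.2.2.2.2.2 := by
    simp [Fintype.sum_prod_type]
  rw [h1, h2]
  exact (Equiv.sum_comp (⟨fun y => (y.1, y.2.2.1, y.2.2.2.2.2, y.2.1, y.2.2.2.1, y.2.2.2.2.1), fun x => (x.1, x.2.2.2.1, x.2.1, x.2.2.2.2.1, x.2.2.2.2.2, x.2.2.1),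
    fun _ => rfl, fun _ => rfl⟩ : (A × B × C × D × E × F) ≃ (A × C × F × B × D × E))
    (fun x : A × C × F × B × D × E => f x.1 x.2.2.2.1 x.2.1 x.2.2.2.2.1 x.2.2.2.2.2 x.2.2.1)).symm

lemma reorder_ADEBCF {A B C D E F : Type*} [Fintype A] [Fintype B] [Fintype C] [Fintype D] [Fintype E] [Fintype F] {M : Type*} [AddCommMonoid M] (f : A → B → C → D → E → F → M) :
    (∑ a1 : A, ∑ a4 : D, ∑ a5 : E, ∑ a2 : B, ∑ a3 : C, ∑ a6 : F, f a1 a2 a3 a4 a5 a6)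
      = ∑ a1 : A, ∑ a2 : B, ∑ a3 : C, ∑ a4 : D, ∑ a5 : E, ∑ a6 : F, f a1 a2 a3 a4 a5 a6 := by
  have h1 : (∑ a1 : A, ∑ a4 : D, ∑ a5 : E, ∑ a2 : B, ∑ a3 : C, ∑ a6 : F, f a1 a2 a3 a4 a5 a6)
      = ∑ x : A × D × E × B × C × F, f x.1 x.2.2.2.1 x.2.2.2.2.1 x.2.1 x.2.2.1 x.2.2.2.2.2 := by
    simp [Fintype.sum_prod_type]
  have h2 : (∑ a1 : A, ∑ a2 : B, ∑ a3 : C, ∑ a4 : D, ∑ a5 : E, ∑ a6 : F, f a1 a2 a3 a4 a5 a6)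
      = ∑ x : A × B × C × D × E × F, f x.1 x.2.1 x.2.2.1 x.2.2.2.1 x.2.2.2.2.1 x.2.2.2.2.2 := by
    simp [Fintype.sum_prod_type]
  rw [h1, h2]
  exact (Equiv.sum_comp (⟨fun y => (y.1, y.2.2.2.1, y.2.2.2.2.1, y.2.1, y.2.2.1, y.2.2.2.2.2), fun x => (x.1, x.2.2.2.1, x.2.2.2.2.1, x.2.1, x.2.2.1, x.2.2.2.2.2),
    fun _ => rfl, fun _ => rfl⟩ : (A × B × C × D × E × F) ≃ (A × D × E × B × C × F))
    (fun x : A × D × E × B × C × F => f x.1 x.2.2.2.1 x.2.2.2.2.1 x.2.1 x.2.2.1 x.2.2.2.2.2)).symm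

lemma reorder_BCEADF {A B C D E F : Type*} [Fintype A] [Fintype B] [Fintype C] [Fintype D] [Fintype E] [Fintype F] {M : Type*} [AddCommMonoid M] (f : A → B → C → D → E → F → M) :
    (∑ a2 : B, ∑ a3 : C, ∑ a5 : E, ∑ a1 : A, ∑ a4 : D, ∑ a6 : F, f a1 a2 a3 a4 a5 a6)
      = ∑ a1 : A, ∑ a2 : B, ∑ a3 : C, ∑ a4 : D, ∑ a5 : E, ∑ a6 : F, f a1 a2 a3 a4 a5 a6 := by
  have h1 : (∑ a2 : B, ∑ a3 : C, ∑ a5 : E, ∑ a1 : A, ∑ a4 : D, ∑ a6 : F, f a1 a2 a3 a4 a5 a6)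
      = ∑ x : B × C × E × A × D × F, f x.2.2.2.1 x.1 x.2.1 x.2.2.2.2.1 x.2.2.1 x.2.2.2.2.2 := by
    simp [Fintype.sum_prod_type]
  have h2 : (∑ a1 : A, ∑ a2 : B, ∑ a3 : C, ∑ a4 : D, ∑ a5 : E, ∑ a6 : F, f a1 a2 a3 a4 a5 a6)
      = ∑ x : A × B × C × D × E × F, f x.1 x.2.1 x.2.2.1 x.2.2.2.1 x.2.2.2.2.1 x.2.2.2.2.2 := by
    simp [Fintype.sum_prod_type]
  rw [h1, h2]
  exact (Equiv.sum_comp (⟨fun y => (y.2.1, y.2.2.1, y.2.2.2.2.1, y.1, y.2.2.2.1, y.2.2.2.2.2), fun x => (x.2.2.2.1, x.1, x.2.1, x.2.2.2.2.1, x.2.2.1, x.2.2.2.2.2),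
    fun _ => rfl, fun _ => rfl⟩ : (A × B × C × D × E × F) ≃ (B × C × E × A × D × F))
    (fun x : B × C × E × A × D × F => f x.2.2.2.1 x.1 x.2.1 x.2.2.2.2.1 x.2.2.1 x.2.2.2.2.2)).symm

lemma reorder4_CDAB {A B C D : Type*} [Fintype A] [Fintype B] [Fintype C] [Fintype D] {M : Type*} [AddCommMonoid M] (f : A → B → C → D → M) :
    (∑ a3 : C, ∑ a4 : D, ∑ a1 : A, ∑ a2 : B, f a1 a2 a3 a4)
      = ∑ a1 : A, ∑ a2 : B, ∑ a3 : C, ∑ a4 : D, f a1 a2 a3 a4 := by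
  have h1 : (∑ a3 : C, ∑ a4 : D, ∑ a1 : A, ∑ a2 : B, f a1 a2 a3 a4)
      = ∑ x : C × D × A × B, f x.2.2.1 x.2.2.2 x.1 x.2.1 := by
    simp [Fintype.sum_prod_type]
  have h2 : (∑ a1 : A, ∑ a2 : B, ∑ a3 : C, ∑ a4 : D, f a1 a2 a3 a4)
      = ∑ x : A × B × C × D, f x.1 x.2.1 x.2.2.1 x.2.2.2 := by
    simp [Fintype.sum_prod_type]
  rw [h1, h2]
  exact (Equiv.sum_comp (⟨fun y => (y.2.2.1, y.2.2.2, y.1, y.2.1), fun x => (x.2.2.1, x.2.2.2, x.1, x.2.1),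
    fun _ => rfl, fun _ => rfl⟩ : (A × B × C × D) ≃ (C × D × A × B))
    (fun x : C × D × A × B => f x.2.2.1 x.2.2.2 x.1 x.2.1)).symm

section Aux

open Finset

lemma fact_grouped {A B C D E F : Type*} [Fintype A] [Fintype B] [Fintype C] [Fintype D]
    [Fintype E] [Fintype F] (g : A → C → E → ℝ) (h : B → D → F → ℝ) :
    (∑ i : A, ∑ j : C, ∑ k : E, ∑ p : B, ∑ q : D, ∑ t : F, g i j k * h p q t)
      = (∑ i : A, ∑ j : C, ∑ k : E, g i j k) * (∑ p : B, ∑ q : D, ∑ t : F, h p q t) := by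
  simp only [← Finset.mul_sum, ← Finset.sum_mul]

lemma key {d : ℕ} (hd : 2 ≤ d) (g : Fin d → Fin d → ℝ) (hg : ∀ i p, 0 ≤ g i p) :
    (∑ c₁ : Fin d, ∑ c₂ : Fin d, if c₁ < c₂ then
        ∑ y : Fin 2, ∑ z : Fin 2, g (if y = 0 then c₁ else c₂) (if z = 0 then c₁ else c₂) else 0)
      ≤ ((d : ℝ) - 1) * ∑ i, ∑ p, g i p := by
  have hexp : ∀ c₁ c₂ : Fin d, (∑ y : Fin 2, ∑ z : Fin 2,
      g (if y = 0 then c₁ else c₂) (if z = 0 then c₁ else c₂))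
      = g c₁ c₁ + g c₁ c₂ + g c₂ c₁ + g c₂ c₂ := by
    intro c₁ c₂
    simp [Fin.sum_univ_two]
    ring
  have hsplit : (∑ c₁ : Fin d, ∑ c₂ : Fin d, if c₁ < c₂ then
        ∑ y : Fin 2, ∑ z : Fin 2, g (if y = 0 then c₁ else c₂) (if z = 0 then c₁ else c₂) else 0)
      = (∑ c₁ : Fin d, ∑ c₂ : Fin d, ((if c₁ < c₂ then g c₁ c₁ else 0) +
          (if c₁ < c₂ then g c₁ c₂ else 0) + (if c₁ < c₂ then g c₂ c₁ else 0) +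
          (if c₁ < c₂ then g c₂ c₂ else 0))) := by
    refine Finset.sum_congr rfl fun c₁ _ => Finset.sum_congr rfl fun c₂ _ => ?_
    rw [hexp]
    split_ifs <;> ring
  rw [hsplit]
  simp only [Finset.sum_add_distrib]
  have hdiag1 : (∑ c₁ : Fin d, ∑ c₂ : Fin d, if c₁ < c₂ then g c₁ c₁ else 0)
      + (∑ c₁ : Fin d, ∑ c₂ : Fin d, if c₁ < c₂ then g c₂ c₂ else 0)
      = ((d : ℝ) - 1) * ∑ i, g i i := by
    have h2 : (∑ c₁ : Fin d, ∑ c₂ : Fin d, if c₁ < c₂ then g c₂ c₂ else 0)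
        = ∑ c₁ : Fin d, ∑ c₂ : Fin d, if c₂ < c₁ then g c₁ c₁ else 0 := by
      rw [Finset.sum_comm]
    rw [h2, ← Finset.sum_add_distrib]
    have : ∀ c₁ : Fin d, (∑ c₂ : Fin d, if c₁ < c₂ then g c₁ c₁ else 0)
        + (∑ c₂ : Fin d, if c₂ < c₁ then g c₁ c₁ else 0) = ((d : ℝ) - 1) * g c₁ c₁ := by
      intro c₁
      rw [← Finset.sum_add_distrib]
      have hpt : ∀ c₂ : Fin d, ((if c₁ < c₂ then g c₁ c₁ else 0) + (if c₂ < c₁ then g c₁ c₁ else 0))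
          = g c₁ c₁ - (if c₁ = c₂ then g c₁ c₁ else 0) := by
        intro c₂
        rcases lt_trichotomy c₁ c₂ with h | h | h
        · simp [h, not_lt_of_gt h, ne_of_lt h]
        · simp [h]
        · simp [h, not_lt_of_gt h, (ne_of_lt h).symm]
      rw [Finset.sum_congr rfl fun c₂ _ => hpt c₂, Finset.sum_sub_distrib]
      simp [Finset.sum_ite_eq, Finset.card_univ, mul_comm]
      ring
    rw [Finset.sum_congr rfl fun c₁ _ => this c₁, ← Finset.mul_sum]
  have hoff : (∑ c₁ : Fin d, ∑ c₂ : Fin d, if c₁ < c₂ then g c₁ c₂ else 0)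
      + (∑ c₁ : Fin d, ∑ c₂ : Fin d, if c₁ < c₂ then g c₂ c₁ else 0)
      = (∑ c₁ : Fin d, ∑ c₂ : Fin d, g c₁ c₂) - ∑ i, g i i := by
    have h2 : (∑ c₁ : Fin d, ∑ c₂ : Fin d, if c₁ < c₂ then g c₂ c₁ else 0)
        = ∑ c₁ : Fin d, ∑ c₂ : Fin d, if c₂ < c₁ then g c₁ c₂ else 0 := by
      rw [Finset.sum_comm]
    rw [h2, ← Finset.sum_add_distrib]
    have hpt : ∀ c₁ c₂ : Fin d, ((if c₁ < c₂ then g c₁ c₂ else 0) + (if c₂ < c₁ then g c₁ c₂ else 0))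
        = g c₁ c₂ - (if c₁ = c₂ then g c₁ c₂ else 0) := by
      intro c₁ c₂
      rcases lt_trichotomy c₁ c₂ with h | h | h
      · simp [h, not_lt_of_gt h, ne_of_lt h]
      · simp [h]
      · simp [h, not_lt_of_gt h, (ne_of_lt h).symm]
    calc (∑ c₁ : Fin d, ((∑ c₂ : Fin d, if c₁ < c₂ then g c₁ c₂ else 0)
            + ∑ c₂ : Fin d, if c₂ < c₁ then g c₁ c₂ else 0))
        = ∑ c₁ : Fin d, ∑ c₂ : Fin d, (g c₁ c₂ - if c₁ = c₂ then g c₁ c₂ else 0) := by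
          refine Finset.sum_congr rfl fun c₁ _ => ?_
          rw [← Finset.sum_add_distrib]
          exact Finset.sum_congr rfl fun c₂ _ => hpt c₁ c₂
      _ = (∑ c₁ : Fin d, ∑ c₂ : Fin d, g c₁ c₂) - ∑ i, g i i := by
          simp only [Finset.sum_sub_distrib]
          congr 1
          exact Finset.sum_congr rfl fun c₁ _ => by simp [Finset.sum_ite_eq]
  have hdle : (∑ i, g i i) ≤ ∑ c₁ : Fin d, ∑ c₂ : Fin d, g c₁ c₂ := by
    refine Finset.sum_le_sum fun i _ => ?_
    exact Finset.single_le_sum (fun p _ => hg i p) (Finset.mem_univ i)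
  have hd2 : (0:ℝ) ≤ (d:ℝ) - 2 := by
    have : (2:ℝ) ≤ (d:ℝ) := by exact_mod_cast hd
    linarith
  nlinarith [hdiag1, hoff, hdle, hd2]

end Aux

open Finset in
/-- The summand of the homogeneous squared-concurrence formula. -/
noncomputable def Tt (a : Fin d1 × Fin d2 × Fin d3 → ℂ) (i p : Fin d1) (j q : Fin d2)
    (k t : Fin d3) : ℝ :=
  ‖a (i, j, k) * a (p, q, t) - a (i, j, t) * a (p, q, k)‖ ^ 2 +
    ‖a (i, j, k) * a (p, q, t) - a (i, q, k) * a (p, j, t)‖ ^ 2 +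
    ‖a (i, j, k) * a (p, q, t) - a (p, j, k) * a (i, q, t)‖ ^ 2

lemma Tt_nonneg (a : Fin d1 × Fin d2 × Fin d3 → ℂ) (i p : Fin d1) (j q : Fin d2) (k t : Fin d3) :
    0 ≤ Tt a i p j q k t := by
  unfold Tt
  positivity

open Finset in
lemma htr1 (a : Fin d1 × Fin d2 × Fin d3 → ℂ) :
    tr1sq (outer a) = ∑ i, ∑ p, ∑ j, ∑ q, ∑ k, ∑ t,
      a (i, j, k) * a (p, q, t) * (starRingEnd ℂ) (a (p, j, k) * a (i, q, t)) := by
  simp only [tr1sq, outer, Matrix.of_apply, Finset.sum_mul_sum]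
  refine sum_congr rfl fun i _ => sum_congr rfl fun p _ => sum_congr rfl fun j _ =>
    sum_congr rfl fun q _ => sum_congr rfl fun k _ => sum_congr rfl fun t _ => ?_
  simp only [map_mul]
  ring

open Finset in
lemma htr23 (a : Fin d1 × Fin d2 × Fin d3 → ℂ) :
    tr23sq (outer a) = ∑ i, ∑ p, ∑ j, ∑ q, ∑ k, ∑ t,
      a (i, j, k) * a (p, q, t) * (starRingEnd ℂ) (a (p, j, k) * a (i, q, t)) := by
  have h1 : tr23sq (outer a) = ∑ j, ∑ q, ∑ k, ∑ t, ∑ i, ∑ p,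
      a (i, j, k) * a (p, q, t) * (starRingEnd ℂ) (a (p, j, k) * a (i, q, t)) := by
    simp only [tr23sq, outer, Matrix.of_apply, Finset.sum_mul_sum]
    refine sum_congr rfl fun j _ => sum_congr rfl fun q _ => sum_congr rfl fun k _ =>
      sum_congr rfl fun t _ => sum_congr rfl fun i _ => sum_congr rfl fun p _ => ?_
    simp only [map_mul]
    ring
  rw [h1]
  exact reorder_CDEFAB (fun i p j q k t =>
    a (i, j, k) * a (p, q, t) * (starRingEnd ℂ) (a (p, j, k) * a (i, q, t)))

open Finset in
lemma htr2 (a : Fin d1 × Fin d2 × Fin d3 → ℂ) :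
    tr2sq (outer a) = ∑ i, ∑ p, ∑ j, ∑ q, ∑ k, ∑ t,
      a (i, j, k) * a (p, q, t) * (starRingEnd ℂ) (a (i, q, k) * a (p, j, t)) := by
  have h1 : tr2sq (outer a) = ∑ j, ∑ q, ∑ i, ∑ p, ∑ k, ∑ t,
      a (i, j, k) * a (p, q, t) * (starRingEnd ℂ) (a (i, q, k) * a (p, j, t)) := by
    simp only [tr2sq, outer, Matrix.of_apply, Finset.sum_mul_sum]
    refine sum_congr rfl fun j _ => sum_congr rfl fun q _ => sum_congr rfl fun i _ =>
      sum_congr rfl fun p _ => sum_congr rfl fun k _ => sum_congr rfl fun t _ => ?_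
    simp only [map_mul]
    ring
  rw [h1]
  exact reorder_CDABEF (fun i p j q k t =>
    a (i, j, k) * a (p, q, t) * (starRingEnd ℂ) (a (i, q, k) * a (p, j, t)))

open Finset in
lemma htr13 (a : Fin d1 × Fin d2 × Fin d3 → ℂ) :
    tr13sq (outer a) = ∑ i, ∑ p, ∑ j, ∑ q, ∑ k, ∑ t,
      a (i, j, k) * a (p, q, t) * (starRingEnd ℂ) (a (i, q, k) * a (p, j, t)) := by
  have h1 : tr13sq (outer a) = ∑ i, ∑ p, ∑ k, ∑ t, ∑ j, ∑ q,
      a (i, j, k) * a (p, q, t) * (starRingEnd ℂ) (a (i, q, k) * a (p, j, t)) := by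
    simp only [tr13sq, outer, Matrix.of_apply, Finset.sum_mul_sum]
    refine sum_congr rfl fun i _ => sum_congr rfl fun p _ => sum_congr rfl fun k _ =>
      sum_congr rfl fun t _ => sum_congr rfl fun j _ => sum_congr rfl fun q _ => ?_
    simp only [map_mul]
    ring
  rw [h1]
  exact reorder_ABEFCD (fun i p j q k t =>
    a (i, j, k) * a (p, q, t) * (starRingEnd ℂ) (a (i, q, k) * a (p, j, t)))

open Finset in
lemma htr12 (a : Fin d1 × Fin d2 × Fin d3 → ℂ) :
    tr12sq (outer a) = ∑ i, ∑ p, ∑ j, ∑ q, ∑ k, ∑ t,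
      a (i, j, k) * a (p, q, t) * (starRingEnd ℂ) (a (i, j, t) * a (p, q, k)) := by
  simp only [tr12sq, outer, Matrix.of_apply, Finset.sum_mul_sum]
  refine sum_congr rfl fun i _ => sum_congr rfl fun p _ => sum_congr rfl fun j _ =>
    sum_congr rfl fun q _ => sum_congr rfl fun k _ => sum_congr rfl fun t _ => ?_
  simp only [map_mul]
  ring

open Finset in
lemma htr3 (a : Fin d1 × Fin d2 × Fin d3 → ℂ) :
    tr3sq (outer a) = ∑ i, ∑ p, ∑ j, ∑ q, ∑ k, ∑ t,
      a (i, j, k) * a (p, q, t) * (starRingEnd ℂ) (a (i, j, t) * a (p, q, k)) := by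
  have h1 : tr3sq (outer a) = ∑ k, ∑ t, ∑ i, ∑ p, ∑ j, ∑ q,
      a (i, j, k) * a (p, q, t) * (starRingEnd ℂ) (a (i, j, t) * a (p, q, k)) := by
    simp only [tr3sq, outer, Matrix.of_apply, Finset.sum_mul_sum]
    refine sum_congr rfl fun k _ => sum_congr rfl fun t _ => sum_congr rfl fun i _ =>
      sum_congr rfl fun p _ => sum_congr rfl fun j _ => sum_congr rfl fun q _ => ?_
    simp only [map_mul]
    ring
  rw [h1]
  exact reorder_EFABCD (fun i p j q k t =>
    a (i, j, k) * a (p, q, t) * (starRingEnd ℂ) (a (i, j, t) * a (p, q, k)))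

open Finset in
lemma hnorm3 (a : Fin d1 × Fin d2 × Fin d3 → ℂ) (ha : ∑ x, Complex.normSq (a x) = 1) :
    (∑ i, ∑ j, ∑ k, Complex.normSq (a (i, j, k))) = 1 := by
  rw [← ha]
  simp [Fintype.sum_prod_type]

open Finset in
lemma hfactx (a : Fin d1 × Fin d2 × Fin d3 → ℂ) (ha : ∑ x, Complex.normSq (a x) = 1) :
    (∑ i, ∑ p, ∑ j, ∑ q, ∑ k, ∑ t,
      Complex.normSq (a (i, j, k)) * Complex.normSq (a (p, q, t))) = 1 := by
  rw [← reorder_ACEBDF (fun i p j q k t =>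
    Complex.normSq (a (i, j, k)) * Complex.normSq (a (p, q, t))),
    fact_grouped (fun i j k => Complex.normSq (a (i, j, k)))
      (fun p q t => Complex.normSq (a (p, q, t))), hnorm3 a ha, one_mul]

open Finset in
lemma hfacty1 (a : Fin d1 × Fin d2 × Fin d3 → ℂ) (ha : ∑ x, Complex.normSq (a x) = 1) :
    (∑ i, ∑ p, ∑ j, ∑ q, ∑ k, ∑ t,
      Complex.normSq (a (i, j, t)) * Complex.normSq (a (p, q, k))) = 1 := by
  rw [← reorder_ACFBDE (fun i p j q k t =>
    Complex.normSq (a (i, j, t)) * Complex.normSq (a (p, q, k))),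
    fact_grouped (fun i j t => Complex.normSq (a (i, j, t)))
      (fun p q k => Complex.normSq (a (p, q, k))), hnorm3 a ha, one_mul]

open Finset in
lemma hfacty2 (a : Fin d1 × Fin d2 × Fin d3 → ℂ) (ha : ∑ x, Complex.normSq (a x) = 1) :
    (∑ i, ∑ p, ∑ j, ∑ q, ∑ k, ∑ t,
      Complex.normSq (a (i, q, k)) * Complex.normSq (a (p, j, t))) = 1 := by
  rw [← reorder_ADEBCF (fun i p j q k t =>
    Complex.normSq (a (i, q, k)) * Complex.normSq (a (p, j, t))),
    fact_grouped (fun i q k => Complex.normSq (a (i, q, k)))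
      (fun p j t => Complex.normSq (a (p, j, t))), hnorm3 a ha, one_mul]

open Finset in
lemma hfacty3 (a : Fin d1 × Fin d2 × Fin d3 → ℂ) (ha : ∑ x, Complex.normSq (a x) = 1) :
    (∑ i, ∑ p, ∑ j, ∑ q, ∑ k, ∑ t,
      Complex.normSq (a (p, j, k)) * Complex.normSq (a (i, q, t))) = 1 := by
  rw [← reorder_BCEADF (fun i p j q k t =>
    Complex.normSq (a (p, j, k)) * Complex.normSq (a (i, q, t))),
    fact_grouped (fun p j k => Complex.normSq (a (p, j, k)))
      (fun i q t => Complex.normSq (a (i, q, t))), hnorm3 a ha, one_mul]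

open Finset in
lemma hX (a : Fin d1 × Fin d2 × Fin d3 → ℂ) (ha : ∑ x, Complex.normSq (a x) = 1) :
    (((2 : ℝ) ^ (3 : ℕ) - 2) -
      (tr1sq (outer a) + tr2sq (outer a) + tr3sq (outer a) +
        tr12sq (outer a) + tr13sq (outer a) + tr23sq (outer a)).re)
      = ∑ i, ∑ p, ∑ j, ∑ q, ∑ k, ∑ t, Tt a i p j q k t := by
  have hpt : ∀ (i p : Fin d1) (j q : Fin d2) (k t : Fin d3), Tt a i p j q k t =
      (Complex.normSq (a (i, j, k)) * Complex.normSq (a (p, q, t)) +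
        Complex.normSq (a (i, j, t)) * Complex.normSq (a (p, q, k)) +
        (Complex.normSq (a (i, j, k)) * Complex.normSq (a (p, q, t)) +
          Complex.normSq (a (i, q, k)) * Complex.normSq (a (p, j, t))) +
        (Complex.normSq (a (i, j, k)) * Complex.normSq (a (p, q, t)) +
          Complex.normSq (a (p, j, k)) * Complex.normSq (a (i, q, t))))
      - (((a (i, j, k) * a (p, q, t) * (starRingEnd ℂ) (a (i, j, t) * a (p, q, k))).re
          + (a (i, j, k) * a (p, q, t) * (starRingEnd ℂ) (a (i, j, t) * a (p, q, k))).re)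
          + (((a (i, j, k) * a (p, q, t) * (starRingEnd ℂ) (a (i, q, k) * a (p, j, t))).re
          + (a (i, j, k) * a (p, q, t) * (starRingEnd ℂ) (a (i, q, k) * a (p, j, t))).re)
          + (((a (i, j, k) * a (p, q, t) * (starRingEnd ℂ) (a (p, j, k) * a (i, q, t))).re
          + (a (i, j, k) * a (p, q, t) * (starRingEnd ℂ) (a (p, j, k) * a (i, q, t))).re)))) := by
    intro i p j q k t
    simp only [Tt, Complex.sq_norm, Complex.normSq_sub, Complex.normSq_mul]
    ring
  rw [htr1, htr2, htr3, htr12, htr13, htr23]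
  simp only [hpt]
  simp only [Finset.sum_sub_distrib, Finset.sum_add_distrib, ← Complex.re_sum]
  rw [hfactx a ha, hfacty1 a ha, hfacty2 a ha, hfacty3 a ha]
  simp only [Complex.add_re]
  ring

open Finset in
lemma sum6_Tt_nonneg (a : Fin d1 × Fin d2 × Fin d3 → ℂ) :
    0 ≤ ∑ i, ∑ p, ∑ j, ∑ q, ∑ k, ∑ t, Tt a i p j q k t := by
  refine Finset.sum_nonneg fun i _ => Finset.sum_nonneg fun p _ =>
    Finset.sum_nonneg fun j _ => Finset.sum_nonneg fun q _ =>
    Finset.sum_nonneg fun k _ => Finset.sum_nonneg fun t _ => Tt_nonneg a i p j q k t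

open Finset in
lemma hpure (a : Fin d1 × Fin d2 × Fin d3 → ℂ) (ha : ∑ x, Complex.normSq (a x) = 1) :
    pureC3 a ^ 2 = (1 / 2) * ∑ i, ∑ p, ∑ j, ∑ q, ∑ k, ∑ t, Tt a i p j q k t := by
  have hXa := hX a ha
  rw [pureC3, mul_pow, Real.sq_sqrt (by rw [hXa]; exact sum6_Tt_nonneg a), hXa]
  congr 1
  rw [← Real.rpow_natCast ((2:ℝ) ^ ((1:ℝ) - 3/2)) 2, ← Real.rpow_mul (by norm_num : (0:ℝ) ≤ 2)]
  rw [show ((1:ℝ) - 3/2) * (2:ℕ) = -1 by push_cast; ring]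
  rw [Real.rpow_neg_one]
  norm_num

open Finset in
lemma ite_le_ite {P : Prop} [Decidable P] {x y : ℝ} (h : x ≤ y) :
    (if P then x else 0) ≤ (if P then y else 0) := by
  split_ifs
  · exact h
  · exact le_rfl

open Finset in
lemma step3 (a : Fin d1 × Fin d2 × Fin d3 → ℂ) (hd3 : 2 ≤ d3)
    (I1 I2 : Fin d1) (J1 J2 : Fin d2) :
    (∑ k1 : Fin d3, ∑ k2 : Fin d3, if k1 < k2 then
        (1 / 2 : ℝ) * ∑ u : Fin 2, ∑ v : Fin 2, ∑ w : Fin 2, ∑ x : Fin 2, ∑ y : Fin 2, ∑ z : Fin 2,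
          Tt a (if u = 0 then I1 else I2) (if v = 0 then I1 else I2)
            (if w = 0 then J1 else J2) (if x = 0 then J1 else J2)
            (if y = 0 then k1 else k2) (if z = 0 then k1 else k2) else 0)
      ≤ (1 / 2 : ℝ) * ∑ u : Fin 2, ∑ v : Fin 2, ∑ w : Fin 2, ∑ x : Fin 2,
          (((d3 : ℝ) - 1) * ∑ k, ∑ t, Tt a (if u = 0 then I1 else I2) (if v = 0 then I1 else I2)
            (if w = 0 then J1 else J2) (if x = 0 then J1 else J2) k t) := by
  have he : (∑ k1 : Fin d3, ∑ k2 : Fin d3, if k1 < k2 then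
        (1 / 2 : ℝ) * ∑ u : Fin 2, ∑ v : Fin 2, ∑ w : Fin 2, ∑ x : Fin 2, ∑ y : Fin 2, ∑ z : Fin 2,
          Tt a (if u = 0 then I1 else I2) (if v = 0 then I1 else I2)
            (if w = 0 then J1 else J2) (if x = 0 then J1 else J2)
            (if y = 0 then k1 else k2) (if z = 0 then k1 else k2) else 0)
      = (1 / 2 : ℝ) * ∑ u : Fin 2, ∑ v : Fin 2, ∑ w : Fin 2, ∑ x : Fin 2,
          ∑ k1 : Fin d3, ∑ k2 : Fin d3, if k1 < k2 then ∑ y : Fin 2, ∑ z : Fin 2,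
            Tt a (if u = 0 then I1 else I2) (if v = 0 then I1 else I2)
              (if w = 0 then J1 else J2) (if x = 0 then J1 else J2)
              (if y = 0 then k1 else k2) (if z = 0 then k1 else k2) else 0 := by
    calc (∑ k1 : Fin d3, ∑ k2 : Fin d3, if k1 < k2 then
        (1 / 2 : ℝ) * ∑ u : Fin 2, ∑ v : Fin 2, ∑ w : Fin 2, ∑ x : Fin 2, ∑ y : Fin 2, ∑ z : Fin 2,
          Tt a (if u = 0 then I1 else I2) (if v = 0 then I1 else I2)
            (if w = 0 then J1 else J2) (if x = 0 then J1 else J2)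
            (if y = 0 then k1 else k2) (if z = 0 then k1 else k2) else 0)
        = ∑ k1 : Fin d3, ∑ k2 : Fin d3, ((1 / 2 : ℝ) *
            ∑ u : Fin 2, ∑ v : Fin 2, ∑ w : Fin 2, ∑ x : Fin 2,
              if k1 < k2 then ∑ y : Fin 2, ∑ z : Fin 2,
                Tt a (if u = 0 then I1 else I2) (if v = 0 then I1 else I2)
                  (if w = 0 then J1 else J2) (if x = 0 then J1 else J2)
                  (if y = 0 then k1 else k2) (if z = 0 then k1 else k2) else 0) := by
          refine Finset.sum_congr rfl fun k1 _ => Finset.sum_congr rfl fun k2 _ => ?_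
          split_ifs with h
          · rfl
          · simp
      _ = (1 / 2 : ℝ) * ∑ k1 : Fin d3, ∑ k2 : Fin d3,
            ∑ u : Fin 2, ∑ v : Fin 2, ∑ w : Fin 2, ∑ x : Fin 2,
              if k1 < k2 then ∑ y : Fin 2, ∑ z : Fin 2,
                Tt a (if u = 0 then I1 else I2) (if v = 0 then I1 else I2)
                  (if w = 0 then J1 else J2) (if x = 0 then J1 else J2)
                  (if y = 0 then k1 else k2) (if z = 0 then k1 else k2) else 0 := by
          simp only [← Finset.mul_sum]
      _ = _ := by
          rw [reorder_EFABCD (fun (u v w x : Fin 2) (k1 k2 : Fin d3) =>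
            if k1 < k2 then ∑ y : Fin 2, ∑ z : Fin 2,
              Tt a (if u = 0 then I1 else I2) (if v = 0 then I1 else I2)
                (if w = 0 then J1 else J2) (if x = 0 then J1 else J2)
                (if y = 0 then k1 else k2) (if z = 0 then k1 else k2) else 0)]
  rw [he]
  refine mul_le_mul_of_nonneg_left ?_ (by norm_num)
  refine Finset.sum_le_sum fun u _ => Finset.sum_le_sum fun v _ =>
    Finset.sum_le_sum fun w _ => Finset.sum_le_sum fun x _ => ?_
  exact key hd3 (fun k t => Tt a (if u = 0 then I1 else I2) (if v = 0 then I1 else I2)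
    (if w = 0 then J1 else J2) (if x = 0 then J1 else J2) k t)
    (fun k t => Tt_nonneg a _ _ _ _ k t)

open Finset in
lemma step2 (a : Fin d1 × Fin d2 × Fin d3 → ℂ) (hd2 : 2 ≤ d2) (hd3 : 2 ≤ d3)
    (I1 I2 : Fin d1) :
    (∑ j1 : Fin d2, ∑ j2 : Fin d2, if j1 < j2 then
        (1 / 2 : ℝ) * ∑ u : Fin 2, ∑ v : Fin 2, ∑ w : Fin 2, ∑ x : Fin 2,
          (((d3 : ℝ) - 1) * ∑ k, ∑ t, Tt a (if u = 0 then I1 else I2) (if v = 0 then I1 else I2)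
            (if w = 0 then j1 else j2) (if x = 0 then j1 else j2) k t) else 0)
      ≤ (1 / 2 : ℝ) * ∑ u : Fin 2, ∑ v : Fin 2,
          (((d2 : ℝ) - 1) * ∑ j, ∑ q, (((d3 : ℝ) - 1) *
            ∑ k, ∑ t, Tt a (if u = 0 then I1 else I2) (if v = 0 then I1 else I2) j q k t)) := by
  have he : (∑ j1 : Fin d2, ∑ j2 : Fin d2, if j1 < j2 then
        (1 / 2 : ℝ) * ∑ u : Fin 2, ∑ v : Fin 2, ∑ w : Fin 2, ∑ x : Fin 2,
          (((d3 : ℝ) - 1) * ∑ k, ∑ t, Tt a (if u = 0 then I1 else I2) (if v = 0 then I1 else I2)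
            (if w = 0 then j1 else j2) (if x = 0 then j1 else j2) k t) else 0)
      = (1 / 2 : ℝ) * ∑ u : Fin 2, ∑ v : Fin 2, ∑ j1 : Fin d2, ∑ j2 : Fin d2,
          if j1 < j2 then ∑ w : Fin 2, ∑ x : Fin 2,
            (((d3 : ℝ) - 1) * ∑ k, ∑ t, Tt a (if u = 0 then I1 else I2) (if v = 0 then I1 else I2)
              (if w = 0 then j1 else j2) (if x = 0 then j1 else j2) k t) else 0 := by
    calc (∑ j1 : Fin d2, ∑ j2 : Fin d2, if j1 < j2 then
        (1 / 2 : ℝ) * ∑ u : Fin 2, ∑ v : Fin 2, ∑ w : Fin 2, ∑ x : Fin 2,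
          (((d3 : ℝ) - 1) * ∑ k, ∑ t, Tt a (if u = 0 then I1 else I2) (if v = 0 then I1 else I2)
            (if w = 0 then j1 else j2) (if x = 0 then j1 else j2) k t) else 0)
        = ∑ j1 : Fin d2, ∑ j2 : Fin d2, ((1 / 2 : ℝ) * ∑ u : Fin 2, ∑ v : Fin 2,
            if j1 < j2 then ∑ w : Fin 2, ∑ x : Fin 2,
              (((d3 : ℝ) - 1) * ∑ k, ∑ t, Tt a (if u = 0 then I1 else I2) (if v = 0 then I1 else I2)
                (if w = 0 then j1 else j2) (if x = 0 then j1 else j2) k t) else 0) := by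
          refine Finset.sum_congr rfl fun j1 _ => Finset.sum_congr rfl fun j2 _ => ?_
          split_ifs with h
          · rfl
          · simp
      _ = (1 / 2 : ℝ) * ∑ j1 : Fin d2, ∑ j2 : Fin d2, ∑ u : Fin 2, ∑ v : Fin 2,
            if j1 < j2 then ∑ w : Fin 2, ∑ x : Fin 2,
              (((d3 : ℝ) - 1) * ∑ k, ∑ t, Tt a (if u = 0 then I1 else I2) (if v = 0 then I1 else I2)
                (if w = 0 then j1 else j2) (if x = 0 then j1 else j2) k t) else 0 := by
          simp only [← Finset.mul_sum]
      _ = _ := by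
          rw [reorder4_CDAB (fun (u v : Fin 2) (j1 j2 : Fin d2) =>
            if j1 < j2 then ∑ w : Fin 2, ∑ x : Fin 2,
              (((d3 : ℝ) - 1) * ∑ k, ∑ t, Tt a (if u = 0 then I1 else I2) (if v = 0 then I1 else I2)
                (if w = 0 then j1 else j2) (if x = 0 then j1 else j2) k t) else 0)]
  rw [he]
  refine mul_le_mul_of_nonneg_left ?_ (by norm_num)
  refine Finset.sum_le_sum fun u _ => Finset.sum_le_sum fun v _ => ?_
  refine key hd2 (fun j q => ((d3 : ℝ) - 1) *
    ∑ k, ∑ t, Tt a (if u = 0 then I1 else I2) (if v = 0 then I1 else I2) j q k t) ?_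
  intro j q
  have h3 : (1:ℝ) ≤ (d3:ℝ) := by
    have : (2:ℝ) ≤ (d3:ℝ) := by exact_mod_cast hd3
    linarith
  refine mul_nonneg (by linarith) ?_
  exact Finset.sum_nonneg fun k _ => Finset.sum_nonneg fun t _ => Tt_nonneg a _ _ _ _ k t

open Finset in
lemma step1 (a : Fin d1 × Fin d2 × Fin d3 → ℂ) (hd1 : 2 ≤ d1) (hd2 : 2 ≤ d2) (hd3 : 2 ≤ d3) :
    (∑ i1 : Fin d1, ∑ i2 : Fin d1, if i1 < i2 then
        (1 / 2 : ℝ) * ∑ u : Fin 2, ∑ v : Fin 2,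
          (((d2 : ℝ) - 1) * ∑ j, ∑ q, (((d3 : ℝ) - 1) *
            ∑ k, ∑ t, Tt a (if u = 0 then i1 else i2) (if v = 0 then i1 else i2) j q k t)) else 0)
      ≤ (1 / 2 : ℝ) * (((d1 : ℝ) - 1) * ∑ i, ∑ p,
          (((d2 : ℝ) - 1) * ∑ j, ∑ q, (((d3 : ℝ) - 1) * ∑ k, ∑ t, Tt a i p j q k t))) := by
  have he : (∑ i1 : Fin d1, ∑ i2 : Fin d1, if i1 < i2 then
        (1 / 2 : ℝ) * ∑ u : Fin 2, ∑ v : Fin 2,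
          (((d2 : ℝ) - 1) * ∑ j, ∑ q, (((d3 : ℝ) - 1) *
            ∑ k, ∑ t, Tt a (if u = 0 then i1 else i2) (if v = 0 then i1 else i2) j q k t)) else 0)
      = (1 / 2 : ℝ) * ∑ i1 : Fin d1, ∑ i2 : Fin d1, (if i1 < i2 then
          ∑ u : Fin 2, ∑ v : Fin 2,
            (((d2 : ℝ) - 1) * ∑ j, ∑ q, (((d3 : ℝ) - 1) *
              ∑ k, ∑ t, Tt a (if u = 0 then i1 else i2) (if v = 0 then i1 else i2) j q k t)) else 0) := by
    rw [Finset.mul_sum]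
    refine Finset.sum_congr rfl fun i1 _ => ?_
    rw [Finset.mul_sum]
    refine Finset.sum_congr rfl fun i2 _ => ?_
    split_ifs with h
    · rfl
    · simp
  rw [he]
  refine mul_le_mul_of_nonneg_left ?_ (by norm_num)
  refine key hd1 (fun i p => ((d2 : ℝ) - 1) * ∑ j, ∑ q, (((d3 : ℝ) - 1) *
    ∑ k, ∑ t, Tt a i p j q k t)) ?_
  intro i p
  have h2 : (1:ℝ) ≤ (d2:ℝ) := by
    have : (2:ℝ) ≤ (d2:ℝ) := by exact_mod_cast hd2
    linarith
  have h3 : (1:ℝ) ≤ (d3:ℝ) := by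
    have : (2:ℝ) ≤ (d3:ℝ) := by exact_mod_cast hd3
    linarith
  refine mul_nonneg (by linarith) ?_
  refine Finset.sum_nonneg fun j _ => Finset.sum_nonneg fun q _ => ?_
  refine mul_nonneg (by linarith) ?_
  exact Finset.sum_nonneg fun k _ => Finset.sum_nonneg fun t _ => Tt_nonneg a _ _ _ _ k t

set_option maxHeartbeats 4000000

/-- for a unit vector `|φ⟩ = Σ a_{ijk}|ijk⟩` in
`ℂ^{d1}⊗ℂ^{d2}⊗ℂ^{d3}` with `d1, d2, d3 ≥ 2`,
`C₃²(|φ⟩) ≥ (1/((d1−1)(d2−1)(d3−1))) Σ C₃²(|φ⟩_{2⊗2⊗2})`, the sum running over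
all choices of index pairs `i₁<i₂`, `j₁<j₂`, `k₁<k₂`. -/
theorem stmt_6 (hd1 : 2 ≤ d1) (hd2 : 2 ≤ d2) (hd3 : 2 ≤ d3)
    (a : Fin d1 × Fin d2 × Fin d3 → ℂ)
    (ha : ∑ x, Complex.normSq (a x) = 1) :
    (pureC3 a) ^ 2 ≥
      (1 / (((d1 : ℝ) - 1) * ((d2 : ℝ) - 1) * ((d3 : ℝ) - 1))) *
        ∑ i₁, ∑ i₂, ∑ j₁, ∑ j₂, ∑ k₁, ∑ k₂,
          if i₁ < i₂ ∧ j₁ < j₂ ∧ k₁ < k₂ then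
            C3sqCoeff (subvec a i₁ i₂ j₁ j₂ k₁ k₂)
          else 0 := by
  have hsub : ∀ (i₁ i₂ : Fin d1) (j₁ j₂ : Fin d2) (k₁ k₂ : Fin d3),
      C3sqCoeff (subvec a i₁ i₂ j₁ j₂ k₁ k₂) = (1 / 2 : ℝ) *
        ∑ u : Fin 2, ∑ v : Fin 2, ∑ w : Fin 2, ∑ x : Fin 2, ∑ y : Fin 2, ∑ z : Fin 2,
          Tt a (if u = 0 then i₁ else i₂) (if v = 0 then i₁ else i₂)
            (if w = 0 then j₁ else j₂) (if x = 0 then j₁ else j₂)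
            (if y = 0 then k₁ else k₂) (if z = 0 then k₁ else k₂) := by
    intro i₁ i₂ j₁ j₂ k₁ k₂
    simp only [C3sqCoeff]
    refine congrArg (fun s => (1 / 2 : ℝ) * s) ?_
    refine Finset.sum_congr rfl fun u _ => Finset.sum_congr rfl fun v _ =>
      Finset.sum_congr rfl fun w _ => Finset.sum_congr rfl fun x _ =>
      Finset.sum_congr rfl fun y _ => Finset.sum_congr rfl fun z _ => ?_
    simp only [subvec, Tt]
  have hR : (∑ i₁, ∑ i₂, ∑ j₁, ∑ j₂, ∑ k₁, ∑ k₂,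
        if i₁ < i₂ ∧ j₁ < j₂ ∧ k₁ < k₂ then
          C3sqCoeff (subvec a i₁ i₂ j₁ j₂ k₁ k₂) else 0)
      ≤ (1 / 2 : ℝ) * (((d1 : ℝ) - 1) * ∑ i, ∑ p,
          (((d2 : ℝ) - 1) * ∑ j, ∑ q, (((d3 : ℝ) - 1) * ∑ k, ∑ t, Tt a i p j q k t))) := by
    calc (∑ i₁, ∑ i₂, ∑ j₁, ∑ j₂, ∑ k₁, ∑ k₂,
        if i₁ < i₂ ∧ j₁ < j₂ ∧ k₁ < k₂ then
          C3sqCoeff (subvec a i₁ i₂ j₁ j₂ k₁ k₂) else 0)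
        = ∑ i₁, ∑ i₂, if i₁ < i₂ then (∑ j₁, ∑ j₂, if j₁ < j₂ then
            (∑ k₁, ∑ k₂, if k₁ < k₂ then (1 / 2 : ℝ) *
              ∑ u : Fin 2, ∑ v : Fin 2, ∑ w : Fin 2, ∑ x : Fin 2, ∑ y : Fin 2, ∑ z : Fin 2,
                Tt a (if u = 0 then i₁ else i₂) (if v = 0 then i₁ else i₂)
                  (if w = 0 then j₁ else j₂) (if x = 0 then j₁ else j₂)
                  (if y = 0 then k₁ else k₂) (if z = 0 then k₁ else k₂) else 0) else 0) else 0 := by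
          simp (config := { maxSteps := 10000000 }) only [ite_and, Finset.sum_ite_irrel, Finset.sum_const_zero]
          simp (config := { maxSteps := 10000000 }) only [hsub]
      _ ≤ ∑ i₁, ∑ i₂, if i₁ < i₂ then (∑ j₁, ∑ j₂, if j₁ < j₂ then
            ((1 / 2 : ℝ) * ∑ u : Fin 2, ∑ v : Fin 2, ∑ w : Fin 2, ∑ x : Fin 2,
              (((d3 : ℝ) - 1) * ∑ k, ∑ t,
                Tt a (if u = 0 then i₁ else i₂) (if v = 0 then i₁ else i₂)
                  (if w = 0 then j₁ else j₂) (if x = 0 then j₁ else j₂) k t)) else 0) else 0 := by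
          refine Finset.sum_le_sum fun i₁ _ => Finset.sum_le_sum fun i₂ _ => ite_le_ite ?_
          refine Finset.sum_le_sum fun j₁ _ => Finset.sum_le_sum fun j₂ _ => ite_le_ite ?_
          exact step3 a hd3 i₁ i₂ j₁ j₂
      _ ≤ ∑ i₁, ∑ i₂, if i₁ < i₂ then
            ((1 / 2 : ℝ) * ∑ u : Fin 2, ∑ v : Fin 2,
              (((d2 : ℝ) - 1) * ∑ j, ∑ q, (((d3 : ℝ) - 1) * ∑ k, ∑ t,
                Tt a (if u = 0 then i₁ else i₂) (if v = 0 then i₁ else i₂) j q k t))) else 0 := by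
          refine Finset.sum_le_sum fun i₁ _ => Finset.sum_le_sum fun i₂ _ => ite_le_ite ?_
          exact step2 a hd2 hd3 i₁ i₂
      _ ≤ (1 / 2 : ℝ) * (((d1 : ℝ) - 1) * ∑ i, ∑ p,
            (((d2 : ℝ) - 1) * ∑ j, ∑ q, (((d3 : ℝ) - 1) * ∑ k, ∑ t, Tt a i p j q k t))) :=
          step1 a hd1 hd2 hd3
  have hconst : (1 / 2 : ℝ) * (((d1 : ℝ) - 1) * ∑ i, ∑ p,
        (((d2 : ℝ) - 1) * ∑ j, ∑ q, (((d3 : ℝ) - 1) * ∑ k, ∑ t, Tt a i p j q k t)))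
      = (((d1 : ℝ) - 1) * ((d2 : ℝ) - 1) * ((d3 : ℝ) - 1)) *
          ((1 / 2 : ℝ) * ∑ i, ∑ p, ∑ j, ∑ q, ∑ k, ∑ t, Tt a i p j q k t) := by
    simp only [← Finset.mul_sum]
    ring
  have hp := hpure a ha
  have hD : (0 : ℝ) < ((d1 : ℝ) - 1) * ((d2 : ℝ) - 1) * ((d3 : ℝ) - 1) := by
    have h1 : (2:ℝ) ≤ (d1:ℝ) := by exact_mod_cast hd1
    have h2 : (2:ℝ) ≤ (d2:ℝ) := by exact_mod_cast hd2
    have h3 : (2:ℝ) ≤ (d3:ℝ) := by exact_mod_cast hd3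
    have : (0:ℝ) < (d1:ℝ) - 1 := by linarith
    have : (0:ℝ) < (d2:ℝ) - 1 := by linarith
    have : (0:ℝ) < (d3:ℝ) - 1 := by linarith
    positivity
  rw [ge_iff_le]
  have hfin : (∑ i₁, ∑ i₂, ∑ j₁, ∑ j₂, ∑ k₁, ∑ k₂,
        if i₁ < i₂ ∧ j₁ < j₂ ∧ k₁ < k₂ then
          C3sqCoeff (subvec a i₁ i₂ j₁ j₂ k₁ k₂) else 0)
      ≤ (((d1 : ℝ) - 1) * ((d2 : ℝ) - 1) * ((d3 : ℝ) - 1)) * pureC3 a ^ 2 := by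
    rw [hp]
    exact hR.trans_eq hconst
  calc (1 / (((d1 : ℝ) - 1) * ((d2 : ℝ) - 1) * ((d3 : ℝ) - 1))) *
        (∑ i₁, ∑ i₂, ∑ j₁, ∑ j₂, ∑ k₁, ∑ k₂,
          if i₁ < i₂ ∧ j₁ < j₂ ∧ k₁ < k₂ then
            C3sqCoeff (subvec a i₁ i₂ j₁ j₂ k₁ k₂) else 0)
      ≤ (1 / (((d1 : ℝ) - 1) * ((d2 : ℝ) - 1) * ((d3 : ℝ) - 1))) *
          ((((d1 : ℝ) - 1) * ((d2 : ℝ) - 1) * ((d3 : ℝ) - 1)) * pureC3 a ^ 2) := by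
        exact mul_le_mul_of_nonneg_left hfin (one_div_pos.mpr hD).le
    _ = pureC3 a ^ 2 := by
        rw [one_div, inv_mul_cancel_left₀ hD.ne']

end Stmt6
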